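/- Let R be a commutative ring that is a finitely generated Z-algebra and let m be a maximal ideal of R. Then the residue field R/m is a finite field. -/

import Mathlib

instance : IsJacobsonRing ℤ := by
  rw [isJacobsonRing_iff_prime_eq]
  intro P hP
  rcases eq_or_ne P ⊥ with rfl | hne
  · refine le_antisymm ?_ Ideal.le_jacobson
    intro x hx
    rw [Ideal.mem_jacobson_bot] at hx
    have h1 := hx 1
    have h2 := hx (-1)
    rw [Int.isUnit_iff] at h1 h2
    simp only [Ideal.mem_bot]
    omega
  · exact Ideal.jacobson_eq_self_of_isMaximal (H := IsPrime.to_maximal_ideal hne)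

/-- Let `R` be a commutative ring that is a finitely generated `ℤ`-algebra and
`m` a maximal ideal of `R`. Then the residue field `R/m` is a finite field. -/
theorem residue_field_finite_of_finiteType_int
    (R : Type*) [CommRing R] [Algebra.FiniteType ℤ R]
    (m : Ideal R) [m.IsMaximal] :
    Finite (R ⧸ m) := by
  let K := R ⧸ m
  letI : Field K := Ideal.Quotient.field m
  haveI : Algebra.FiniteType ℤ K :=
    Algebra.FiniteType.of_surjective
      (Ideal.Quotient.mkₐ ℤ m) (Ideal.Quotient.mkₐ_surjective ℤ m)
  haveI : Module.Finite ℤ K := finite_of_finite_type_of_isJacobsonRing ℤ K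
  haveI : Algebra.IsIntegral ℤ K := Algebra.IsIntegral.of_finite ℤ K
  -- characteristic of K
  obtain ⟨p, hp⟩ := CharP.exists K
  rcases CharP.char_is_prime_or_zero K p with hprime | hzero
  · -- positive characteristic: K is finite over ZMod p
    haveI : Fact p.Prime := ⟨hprime⟩
    letI : Algebra (ZMod p) K := ZMod.algebra K p
    haveI : Module.Finite (ZMod p) K :=
      Module.Finite.of_restrictScalars_finite ℤ (ZMod p) K
    exact Module.finite_of_finite (ZMod p)
  · -- characteristic zero: contradiction
    subst hzero
    haveI : CharZero K := CharP.charP_to_charZero K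
    exfalso
    haveI : IsScalarTower ℤ ℚ K := IsScalarTower.of_algebraMap_eq fun n => by
      simp [Algebra.algebraMap_eq_smul_one]
    have hinj : Function.Injective (algebraMap ℚ K) := (algebraMap ℚ K).injective
    have hx : IsIntegral ℤ (algebraMap ℚ K ((1 : ℚ)/2)) := Algebra.IsIntegral.isIntegral _
    have hx' : IsIntegral ℤ ((1 : ℚ)/2) := IsIntegral.tower_bot (R := ℤ) hinj hx
    obtain ⟨y, hy⟩ := IsIntegrallyClosed.isIntegral_iff.mp hx'
    have : (y : ℚ) = 1/2 := by simpa using hy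
    have : (2 : ℚ) * y = 1 := by rw [this]; ring
    have : (2 : ℤ) * y = 1 := by exact_mod_cast this
    omega
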